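/- For an integer n ≥ 2 that is a power of 2, the Möbius pattern complexity of ADDR_n is at least 2^n: the inputs (1^{log n}, s) for s ∈ {0,1}^n induce pairwise distinct evaluation patterns on the monomials {y_b · Π_{i∈[log n]} x_i : b ∈ [n]}, all of which lie in the Möbius support of ADDR_n. -/
import Mathlib


/-- The integer (element of `Fin 2^m`) whose binary representation is `x`. -/
def binOf {m : ℕ} (x : Fin m → Bool) : Fin (2 ^ m) :=
  finFunctionFinEquiv (fun i => if x i then 1 else 0)

/-- The Addressing function on `m + 2^m` input bits. -/
def ADDR (m : ℕ) (z : (Fin m ⊕ Fin (2 ^ m)) → Bool) : Bool :=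
  z (Sum.inr (binOf (fun i => z (Sum.inl i))))

/-- `AND_S(z)` as a Boolean, over an arbitrary index type. -/
def andB {ι : Type*} (S : Finset ι) (z : ι → Bool) : Bool :=
  decide (∀ i ∈ S, z i = true)

open Finset

lemma myInnerSum {ι : Type*} [DecidableEq ι] (S U : Finset ι) (hU : U ⊆ S) :
    ∑ T ∈ S.powerset.filter (fun T => U ⊆ T), (-1:ℝ)^(S \ T).card
      = if U = S then 1 else 0 := by
  have key : ∑ T ∈ S.powerset.filter (fun T => U ⊆ T), (-1:ℝ)^(S \ T).card
      = ∑ V ∈ (S \ U).powerset, (-1:ℝ)^V.card := by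
    refine Finset.sum_bij' (fun T _ => S \ T) (fun V _ => S \ V) ?_ ?_ ?_ ?_ ?_
    · intro T hT
      simp only [mem_filter, mem_powerset] at hT
      exact mem_powerset.2 (sdiff_subset_sdiff (le_refl S) hT.2)
    · intro V hV
      simp only [mem_powerset] at hV
      simp only [mem_filter, mem_powerset]
      refine ⟨sdiff_subset, ?_⟩
      intro u hu
      have hus : u ∈ S := hU hu
      simp only [mem_sdiff]
      exact ⟨hus, fun huV => (mem_sdiff.1 (hV huV)).2 hu⟩
    · intro T hT
      simp only [mem_filter, mem_powerset] at hT
      exact Finset.sdiff_sdiff_eq_self hT.1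
    · intro V hV
      simp only [mem_powerset] at hV
      exact Finset.sdiff_sdiff_eq_self (hV.trans sdiff_subset)
    · intro T hT; rfl
  rw [key]
  have : ((∑ V ∈ (S \ U).powerset, (-1:ℤ)^V.card : ℤ) : ℝ)
      = ∑ V ∈ (S \ U).powerset, (-1:ℝ)^V.card := by push_cast; rfl
  rw [← this, Finset.sum_powerset_neg_one_pow_card]
  by_cases h : U = S
  · simp [h]
  · rw [if_neg h, if_neg]
    · simp
    · intro he
      exact h (Finset.Subset.antisymm hU (by rwa [← Finset.sdiff_eq_empty_iff_subset]))

lemma mobius_inv {ι : Type*} [DecidableEq ι] (c : Finset ι → ℝ) (S : Finset ι) :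
    ∑ T ∈ S.powerset, (-1 : ℝ) ^ (S \ T).card * ∑ U ∈ T.powerset, c U = c S := by
  have swap :
      ∑ T ∈ S.powerset, ∑ U ∈ T.powerset, (-1 : ℝ) ^ (S \ T).card * c U
        = ∑ U ∈ S.powerset, ∑ T ∈ S.powerset.filter (fun T => U ⊆ T),
            (-1 : ℝ) ^ (S \ T).card * c U := by
    refine Finset.sum_comm' ?_
    intro T U
    simp only [mem_filter, mem_powerset]
    constructor
    · rintro ⟨h1, h2⟩; exact ⟨⟨h1, h2⟩, h2.trans h1⟩
    · rintro ⟨⟨h1, h2⟩, _⟩; exact ⟨h1, h2⟩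
  calc ∑ T ∈ S.powerset, (-1 : ℝ) ^ (S \ T).card * ∑ U ∈ T.powerset, c U
      = ∑ T ∈ S.powerset, ∑ U ∈ T.powerset, (-1 : ℝ) ^ (S \ T).card * c U := by
        simp [Finset.mul_sum]
    _ = ∑ U ∈ S.powerset, ∑ T ∈ S.powerset.filter (fun T => U ⊆ T),
            (-1 : ℝ) ^ (S \ T).card * c U := swap
    _ = ∑ U ∈ S.powerset, (if U = S then 1 else 0) * c U := by
        refine Finset.sum_congr rfl (fun U hU => ?_)
        rw [← Finset.sum_mul, myInnerSum S U (mem_powerset.1 hU)]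
    _ = c S := by
        simp only [ite_mul, one_mul, zero_mul, Finset.sum_ite_eq']
        simp

lemma binOf_injective {m : ℕ} : Function.Injective (binOf (m := m)) := by
  intro x y h
  have h2 : (fun i => if x i then (1 : Fin 2) else 0) = (fun i => if y i then (1 : Fin 2) else 0) :=
    finFunctionFinEquiv.injective h
  funext i
  have := congrFun h2 i
  cases hx : x i <;> cases hy : y i <;> simp [hx, hy] at this ⊢

lemma binOf_surjective {m : ℕ} : Function.Surjective (binOf (m := m)) := by
  have hcard : Fintype.card (Fin m → Bool) = Fintype.card (Fin (2 ^ m)) := by simp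
  exact ((Fintype.bijective_iff_injective_and_card _).2 ⟨binOf_injective, hcard⟩).2

lemma prod_ind {ι : Type*} [DecidableEq ι] (S T : Finset ι) :
    (∏ i ∈ S, (if (i ∈ T) then (1:ℝ) else 0)) = if S ⊆ T then 1 else 0 := by
  by_cases h : S ⊆ T
  · rw [if_pos h]
    exact Finset.prod_eq_one (fun i hi => by rw [if_pos (h hi)])
  · rw [if_neg h]
    obtain ⟨i, hiS, hiT⟩ := Finset.not_subset.1 h
    exact Finset.prod_eq_zero hiS (by rw [if_neg hiT])

lemma andB_eval {m : ℕ} (b : Fin (2 ^ m)) (s : Fin (2 ^ m) → Bool) :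
    andB (insert (Sum.inr b) (Finset.univ.image Sum.inl) :
        Finset (Fin m ⊕ Fin (2 ^ m))) (Sum.elim (fun _ => true) s) = s b := by
  unfold andB
  cases h : s b
  · simp only [decide_eq_false_iff_not]
    intro hall
    have := hall (Sum.inr b) (Finset.mem_insert_self _ _)
    simp [h] at this
  · simp only [decide_eq_true_eq]
    intro i hi
    rcases Finset.mem_insert.1 hi with rfl | hi'
    · simpa using h
    · obtain ⟨a, _, rfl⟩ := Finset.mem_image.1 hi'
      rfl

/-- For `n = 2^m ≥ 2` a power of two, the Möbius pattern complexity of `ADDR_n` is at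
least `2^n`; moreover each monomial `y_b · ∏_{i} x_i` lies in the Möbius support. -/
theorem stmt16 (m : ℕ) (hm : 1 ≤ m) (c : Finset (Fin m ⊕ Fin (2 ^ m)) → ℝ)
    (Sf : Finset (Finset (Fin m ⊕ Fin (2 ^ m)))) (hmem : ∀ S, S ∈ Sf ↔ c S ≠ 0)
    (hf : ∀ z : (Fin m ⊕ Fin (2 ^ m)) → Bool,
      (if ADDR m z then (1 : ℝ) else 0) =
        ∑ S : Finset (Fin m ⊕ Fin (2 ^ m)), c S * ∏ i ∈ S, (if z i then (1 : ℝ) else 0)) :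
    (∀ b : Fin (2 ^ m),
      (insert (Sum.inr b) (Finset.univ.image Sum.inl) :
        Finset (Fin m ⊕ Fin (2 ^ m))) ∈ Sf) ∧
    2 ^ (2 ^ m) ≤
      (Finset.univ.image
        (fun z : (Fin m ⊕ Fin (2 ^ m)) → Bool =>
          fun S : {S // S ∈ Sf} => andB S.1 z)).card := by
  classical
  have hg : ∀ T : Finset (Fin m ⊕ Fin (2 ^ m)),
      (if Sum.inr (binOf (fun i => decide (Sum.inl i ∈ T))) ∈ T then (1:ℝ) else 0)
        = ∑ U ∈ T.powerset, c U := by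
    intro T
    have h1 := hf (fun i => decide (i ∈ T))
    rw [show ADDR m (fun i => decide (i ∈ T))
        = decide (Sum.inr (binOf (fun i => decide (Sum.inl i ∈ T))) ∈ T) from rfl] at h1
    simp only [decide_eq_true_eq] at h1
    rw [h1]
    have h2 : ∀ S : Finset (Fin m ⊕ Fin (2 ^ m)),
        c S * ∏ i ∈ S, (if (i ∈ T) then (1:ℝ) else 0)
          = if S ⊆ T then c S else 0 := by
      intro S
      rw [prod_ind, mul_ite, mul_one, mul_zero]
    rw [Finset.sum_congr rfl (fun S _ => h2 S), ← Finset.sum_filter]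
    congr 1
    ext S
    simp [Finset.mem_powerset]
  have part1 : ∀ b : Fin (2 ^ m),
      (insert (Sum.inr b) (Finset.univ.image Sum.inl) :
        Finset (Fin m ⊕ Fin (2 ^ m))) ∈ Sf := by
    intro b
    rw [hmem]
    obtain ⟨xb, hxb⟩ := binOf_surjective b
    set Sb : Finset (Fin m ⊕ Fin (2 ^ m)) :=
      insert (Sum.inr b) (Finset.univ.image Sum.inl) with hSb
    set T0 : Finset (Fin m ⊕ Fin (2 ^ m)) :=
      insert (Sum.inr b) ((Finset.univ.filter (fun i => xb i = true)).image Sum.inl) with hT0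
    have hT0sub : T0 ⊆ Sb := by
      intro e he
      rcases Finset.mem_insert.1 he with rfl | he'
      · exact Finset.mem_insert_self _ _
      · obtain ⟨a, _, rfl⟩ := Finset.mem_image.1 he'
        exact Finset.mem_insert.2 (Or.inr (Finset.mem_image.2 ⟨a, Finset.mem_univ a, rfl⟩))
    have hxT0 : (fun i => decide (Sum.inl i ∈ T0)) = xb := by
      funext i
      have hiff : (Sum.inl i ∈ T0) ↔ xb i = true := by
        simp [hT0]
      cases h : xb i <;> simp [hiff, h]
    have hmain : c Sb = (-1 : ℝ) ^ (Sb \ T0).card := by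
      rw [← mobius_inv c Sb, Finset.sum_eq_single T0]
      · rw [← hg T0]
        have hin0 : Sum.inr (binOf (fun i => decide (Sum.inl i ∈ T0))) ∈ T0 := by
          rw [hxT0, hxb]; exact Finset.mem_insert_self _ _
        rw [if_pos hin0, mul_one]
      · intro T hT hne
        rw [← hg T]
        by_cases hin : Sum.inr (binOf (fun i => decide (Sum.inl i ∈ T))) ∈ T
        · exfalso
          apply hne
          have hTsub : T ⊆ Sb := Finset.mem_powerset.1 hT
          -- the address must be b
          have hjb : binOf (fun i => decide (Sum.inl i ∈ T)) = b := by
            have := hTsub hin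
            rcases Finset.mem_insert.1 this with h' | h'
            · exact Sum.inr.inj h'
            · obtain ⟨a, _, ha⟩ := Finset.mem_image.1 h'
              exact absurd ha (by simp)
          have hxeq : (fun i => decide (Sum.inl i ∈ T)) = xb :=
            binOf_injective (by rw [hjb, hxb])
          have hinb : Sum.inr b ∈ T := by rwa [hjb] at hin
          ext e
          rcases e with i | j
          · have hi := congrFun hxeq i
            simp only [hT0, Finset.mem_insert, Finset.mem_image, Finset.mem_filter,
              Finset.mem_univ, true_and]
            constructor
            · intro h
              right
              exact ⟨i, by rw [← hi]; simpa using h, rfl⟩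
            · rintro (h | ⟨a, ha, hae⟩)
              · exact absurd h (by simp)
              · obtain rfl := Sum.inl.inj hae
                have h3 : decide (Sum.inl a ∈ T) = true := by
                  rw [congrFun hxeq a]; exact ha
                simpa using h3
          · constructor
            · intro h
              have := hTsub h
              rcases Finset.mem_insert.1 this with h' | h'
              · rw [Sum.inr.inj h']
                exact Finset.mem_insert_self _ _
              · obtain ⟨a, _, ha⟩ := Finset.mem_image.1 h'
                exact absurd ha (by simp)
            · intro h
              rcases Finset.mem_insert.1 h with h' | h'
              · rw [Sum.inr.inj h']
                exact hinb
              · obtain ⟨a, _, ha⟩ := Finset.mem_image.1 h'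
                exact absurd ha (by simp)
        · rw [if_neg hin, mul_zero]
      · intro habs
        exact absurd (Finset.mem_powerset.2 hT0sub) habs
    rw [hmain]
    exact pow_ne_zero _ (by norm_num)
  refine ⟨part1, ?_⟩
  set P := fun z : (Fin m ⊕ Fin (2 ^ m)) → Bool =>
    fun S : {S // S ∈ Sf} => andB S.1 z with hP
  have inj : Function.Injective
      (fun s : Fin (2 ^ m) → Bool => P (Sum.elim (fun _ => true) s)) := by
    intro s s' h
    funext b
    have h2 := congrFun h (⟨_, part1 b⟩ : {S // S ∈ Sf})
    simp only [hP] at h2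
    rwa [andB_eval, andB_eval] at h2
  have hsub : (Finset.univ.image (fun s : Fin (2 ^ m) → Bool => P (Sum.elim (fun _ => true) s)))
      ⊆ Finset.univ.image P := by
    intro p hp
    obtain ⟨s, _, rfl⟩ := Finset.mem_image.1 hp
    exact Finset.mem_image.2 ⟨_, Finset.mem_univ _, rfl⟩
  calc 2 ^ (2 ^ m)
      = (Finset.univ.image (fun s : Fin (2 ^ m) → Bool => P (Sum.elim (fun _ => true) s))).card := by
        rw [Finset.card_image_of_injective _ inj, Finset.card_univ]
        simp
    _ ≤ _ := Finset.card_le_card hsub
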